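/- arXiv:1906.07715 — 3 statements merged into one kernel-verified Lean document; each statement's English description precedes it below -/
import Mathlib

section
/- Let (P_n) and (Q_n) be simple sets of polynomials with dual bases (a_n) and (b_n) respectively, and suppose π is a fixed polynomial of degree N and the structure relation π(x) P_n^{[m]}(x) = ∑_{j=n-M}^{n+N} c_{n,j} Q_j^{[k]}(x) holds for all n (with Q_j ≡ 0 for j < 0 and c_{n,n+N} = 1). Let (a_n^{[m]}) and (b_n^{[k]}) be the dual bases of (P_n^{[m]}) and (Q_n^{[k]}). Then for every n ≥ 0, π b_n^{[k]} = ∑_{j=n-N}^{n+M} c_{j,n} a_j^{[m]}, where terms with negative index are zero and c_{j,n} := 0 whenever n < j - M or n > j + N. -/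
open Polynomial Finset

/-- Left product of a polynomial by a moment functional: ⟨Φw, p⟩ = ⟨w, Φp⟩. -/
noncomputable def lmul (Φ : ℂ[X]) (w : ℂ[X] →ₗ[ℂ] ℂ) : ℂ[X] →ₗ[ℂ] ℂ :=
  w ∘ₗ LinearMap.mulLeft ℂ Φ

/-- The monic-normalized m-th derivative `P_n^{[m]} = (1/(n+1)_m) P_{n+m}^{(m)}`. -/
noncomputable def normDeriv (P : ℕ → ℂ[X]) (m n : ℕ) : ℂ[X] :=
  (∏ i ∈ Finset.range m, ((n : ℂ) + 1 + i))⁻¹ • derivative^[m] (P (n + m))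

lemma span_aux (f : ℕ → ℂ[X]) (h0 : ∀ n, f n ≠ 0) (hd : ∀ n, (f n).natDegree = n) :
    ∀ d (p : ℂ[X]), p.natDegree ≤ d → p ∈ Submodule.span ℂ (Set.range f) := by
  intro d
  induction d using Nat.strong_induction_on with
  | _ d ih =>
    intro p hp
    by_cases hp0 : p = 0
    · simp [hp0]
    rcases lt_or_eq_of_le hp with h | h
    · cases d with
      | zero => omega
      | succ d => exact ih d (Nat.lt_succ_self d) p (by omega)
    set q := p - (p.leadingCoeff / (f d).leadingCoeff) • f d with hq
    have hfL : (f d).leadingCoeff ≠ 0 := leadingCoeff_ne_zero.mpr (h0 d)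
    have hcoeff : q.coeff d = 0 := by
      have h1 : p.coeff d = p.leadingCoeff := by rw [← h]; rfl
      have h2 : (f d).coeff d = (f d).leadingCoeff := by
        rw [Polynomial.leadingCoeff, hd d]
      rw [hq, Polynomial.coeff_sub, Polynomial.coeff_smul, h1, h2, smul_eq_mul,
        div_mul_cancel₀ _ hfL, sub_self]
    have hqdeg : q.natDegree ≤ d := by
      exact le_trans (natDegree_sub_le _ _) (max_le (le_of_eq h)
        (le_trans (natDegree_smul_le _ _) (le_of_eq (hd d))))
    have hmem : q ∈ Submodule.span ℂ (Set.range f) := by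
      by_cases hq0 : q = 0
      · simp [hq0]
      · have hne : q.natDegree ≠ d := by
          intro hh
          apply leadingCoeff_ne_zero.mpr hq0
          rw [Polynomial.leadingCoeff, hh, hcoeff]
        exact ih q.natDegree (lt_of_le_of_ne hqdeg hne) q le_rfl
    have hpe : p = q + (p.leadingCoeff / (f d).leadingCoeff) • f d := by
      rw [hq]; ring
    rw [hpe]
    exact Submodule.add_mem _ hmem
      (Submodule.smul_mem _ _ (Submodule.subset_span ⟨d, rfl⟩))

lemma normDeriv_facts (P : ℕ → ℂ[X]) (m : ℕ) (hPmonic : ∀ n, (P n).Monic)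
    (hPdeg : ∀ n, (P n).natDegree = n) (n : ℕ) :
    normDeriv P m n ≠ 0 ∧ (normDeriv P m n).natDegree = n := by
  have hscal : (∏ i ∈ Finset.range m, ((n : ℂ) + 1 + i))⁻¹ ≠ 0 := by
    apply inv_ne_zero
    apply Finset.prod_ne_zero_iff.mpr
    intro i _
    have h2 : ((n + 1 + i : ℕ) : ℂ) ≠ 0 := Nat.cast_ne_zero.mpr (by omega)
    push_cast at h2
    exact h2
  have hcoeff : (derivative^[m] (P (n + m))).coeff n ≠ 0 := by
    rw [coeff_iterate_derivative]
    have h1 : (P (n + m)).coeff (n + m) = 1 := by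
      have h3 := (hPmonic (n + m)).leadingCoeff
      rwa [Polynomial.leadingCoeff, hPdeg] at h3
    rw [h1, nsmul_eq_mul, mul_one]
    exact_mod_cast fun hh => absurd (Nat.descFactorial_eq_zero_iff_lt.mp hh) (by omega)
  have hdegle : (derivative^[m] (P (n + m))).natDegree ≤ n := by
    have := Polynomial.natDegree_iterate_derivative (P (n + m)) m
    rwa [hPdeg, Nat.add_sub_cancel] at this
  have hne : normDeriv P m n ≠ 0 := by
    intro hh
    apply hcoeff
    have := congrArg (fun p => Polynomial.coeff p n) hh
    simp only [normDeriv, Polynomial.coeff_smul, Polynomial.coeff_zero, smul_eq_mul] at this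
    rcases mul_eq_zero.mp this with h | h
    · exact absurd h hscal
    · exact h
  refine ⟨hne, ?_⟩
  have hdne : (derivative^[m] (P (n + m))) ≠ 0 := fun hh => hcoeff (by simp [hh])
  apply le_antisymm
  · exact le_trans (natDegree_smul_le _ _) hdegle
  · apply Polynomial.le_natDegree_of_ne_zero
    simp only [normDeriv, Polynomial.coeff_smul, smul_eq_mul]
    exact mul_ne_zero hscal hcoeff

/-- From the structure relation `π P_n^{[m]} = ∑_{j=n-M}^{n+N} c_{n,j} Q_j^{[k]}` one deduces
the dual relation `π b_n^{[k]} = ∑_{j=n-N}^{n+M} c_{j,n} a_j^{[m]}`. -/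
theorem stmt4 (P Q : ℕ → ℂ[X]) (m k M N : ℕ) (π : ℂ[X]) (c : ℕ → ℕ → ℂ)
    (hPmonic : ∀ n, (P n).Monic) (hPdeg : ∀ n, (P n).natDegree = n)
    (hQmonic : ∀ n, (Q n).Monic) (hQdeg : ∀ n, (Q n).natDegree = n)
    (hπ : π.natDegree = N)
    -- the dual bases of (P_n) and (Q_n)
    (a b : ℕ → (ℂ[X] →ₗ[ℂ] ℂ))
    (ha : ∀ i j, a i (P j) = if i = j then 1 else 0)
    (hb : ∀ i j, b i (Q j) = if i = j then 1 else 0)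
    -- the dual bases of the normalized derivatives (P_n^{[m]}) and (Q_n^{[k]})
    (aM bK : ℕ → (ℂ[X] →ₗ[ℂ] ℂ))
    (haM : ∀ i j, aM i (normDeriv P m j) = if i = j then 1 else 0)
    (hbK : ∀ i j, bK i (normDeriv Q k j) = if i = j then 1 else 0)
    -- conventions on the coefficients : c_{n,j} = 0 outside n-M ≤ j ≤ n+N, c_{n,n+N} = 1
    (hc0 : ∀ n j, (j + M < n ∨ n + N < j) → c n j = 0)
    (hc1 : ∀ n, c n (n + N) = 1)
    -- the structure relation
    (hstruct : ∀ n, π * normDeriv P m n =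
      ∑ j ∈ Finset.range (n + N + 1), c n j • normDeriv Q k j) :
    ∀ n, lmul π (bK n) = ∑ j ∈ Finset.range (n + M + 1), c j n • aM j := by
  intro n
  have hspan : Submodule.span ℂ (Set.range (normDeriv P m)) = ⊤ := by
    rw [eq_top_iff]
    intro p _
    exact span_aux (normDeriv P m)
      (fun j => (normDeriv_facts P m hPmonic hPdeg j).1)
      (fun j => (normDeriv_facts P m hPmonic hPdeg j).2)
      p.natDegree p le_rfl
  apply LinearMap.ext_on hspan
  rintro _ ⟨i, rfl⟩
  have hL : lmul π (bK n) (normDeriv P m i) = c i n := by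
    show bK n (π * normDeriv P m i) = c i n
    rw [hstruct i, map_sum]
    simp only [map_smul, hbK, smul_eq_mul, mul_ite, mul_one, mul_zero]
    rw [Finset.sum_ite_eq]
    split
    · rfl
    · next hn =>
        rw [Finset.mem_range] at hn
        exact (hc0 i n (Or.inr (by omega))).symm
  rw [hL]
  rw [LinearMap.sum_apply]
  simp only [LinearMap.smul_apply, haM, smul_eq_mul, mul_ite, mul_one, mul_zero]
  rw [Finset.sum_ite_eq']
  split
  · rfl
  · next hi =>
      rw [Finset.mem_range] at hi
      exact hc0 i n (Or.inl (by omega))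
end

section
/- Suppose u and v are linear functionals on polynomials, A, A_1, A_2 are polynomials with A not identically zero, and Av = A_1 u and A(Dv) = A_2 u hold as functional identities. Then D(A A_1 u) = (2A' A_1 + A A_2) u and D(A A_1 v) = ((A A_1)' + A A_2) v. In particular, if A_1 ≠ 0 then both u and v satisfy a Pearson-type (semiclassical) functional equation D(Φ w) = Ψ w with nonzero Φ. -/
open Polynomial

/-- Distributional derivative of a moment functional: ⟨Dw, p⟩ = -⟨w, p'⟩. -/
noncomputable def fD (w : ℂ[X] →ₗ[ℂ] ℂ) : ℂ[X] →ₗ[ℂ] ℂ :=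
  -(w ∘ₗ (derivative : ℂ[X] →ₗ[ℂ] ℂ[X]))

lemma lmul_lmul (Φ Ψ : ℂ[X]) (w : ℂ[X] →ₗ[ℂ] ℂ) :
    lmul Φ (lmul Ψ w) = lmul (Φ * Ψ) w := LinearMap.ext fun p => by
  simp only [lmul, LinearMap.coe_comp, Function.comp_apply, LinearMap.mulLeft_apply]
  ring_nf

lemma lmul_add' (Φ Ψ : ℂ[X]) (w : ℂ[X] →ₗ[ℂ] ℂ) :
    lmul (Φ + Ψ) w = lmul Φ w + lmul Ψ w := LinearMap.ext fun p => by
  simp [lmul, add_mul]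

lemma fD_lmul (Φ : ℂ[X]) (w : ℂ[X] →ₗ[ℂ] ℂ) :
    fD (lmul Φ w) = lmul (derivative Φ) w + lmul Φ (fD w) := LinearMap.ext fun p => by
  simp only [lmul, fD, LinearMap.coe_comp, Function.comp_apply, LinearMap.neg_apply,
    LinearMap.add_apply, LinearMap.mulLeft_apply, derivative_mul, map_add]
  ring

/-- If `Av = A₁u` and `A(Dv) = A₂u` with `A ≠ 0`, then
`D(AA₁u) = (2A'A₁ + AA₂)u` and `D(AA₁v) = ((AA₁)' + AA₂)v`; in particular, when `A₁ ≠ 0`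
both `u` and `v` satisfy a Pearson-type equation `D(Φw) = Ψw` with nonzero `Φ`. -/
theorem stmt7 (u v : ℂ[X] →ₗ[ℂ] ℂ) (A A₁ A₂ : ℂ[X]) (hA : A ≠ 0)
    (h1 : lmul A v = lmul A₁ u) (h2 : lmul A (fD v) = lmul A₂ u) :
    fD (lmul (A * A₁) u) = lmul (2 * derivative A * A₁ + A * A₂) u ∧
    fD (lmul (A * A₁) v) = lmul (derivative (A * A₁) + A * A₂) v ∧
    (A₁ ≠ 0 →
      (∃ Φ Ψ : ℂ[X], Φ ≠ 0 ∧ fD (lmul Φ u) = lmul Ψ u) ∧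
      (∃ Φ Ψ : ℂ[X], Φ ≠ 0 ∧ fD (lmul Φ v) = lmul Ψ v)) := by
  have hu : lmul (A * A₁) u = lmul (A * A) v := by
    rw [← lmul_lmul, ← h1, lmul_lmul]
  have g1 : fD (lmul (A * A₁) u) = lmul (2 * derivative A * A₁ + A * A₂) u := by
    rw [hu, fD_lmul, derivative_mul, lmul_add']
    have e1 : lmul (derivative A * A) v = lmul (derivative A * A₁) u := by
      rw [← lmul_lmul, h1, lmul_lmul]
    have e2 : lmul (A * derivative A) v = lmul (derivative A * A₁) u := by
      rw [mul_comm]; exact e1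
    have e3 : lmul (A * A) (fD v) = lmul (A * A₂) u := by
      rw [← lmul_lmul, h2, lmul_lmul]
    rw [e1, e2, e3, ← lmul_add', ← lmul_add']
    congr 1
    ring
  have g2 : fD (lmul (A * A₁) v) = lmul (derivative (A * A₁) + A * A₂) v := by
    rw [fD_lmul]
    have e3 : lmul (A * A₁) (fD v) = lmul (A * A₂) v := by
      rw [mul_comm A A₁, ← lmul_lmul, h2, lmul_lmul, mul_comm A₁ A₂,
        ← lmul_lmul, ← h1, lmul_lmul, mul_comm A₂ A]
    rw [e3, ← lmul_add']
  refine ⟨g1, g2, fun hA₁ => ⟨⟨A * A₁, _, mul_ne_zero hA hA₁, g1⟩,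
    ⟨A * A₁, _, mul_ne_zero hA hA₁, g2⟩⟩⟩
end

section
/- With notation as in the previous structure relation, if s_1 > 0 then 2s_1 + r_0 r_1 = γ_1 + s_1 + r_0² > 0; in particular 2s_1 + r_0 r_1 ≠ 0, and the recurrence coefficients can be recovered as β_0 = r_0, β_1 = 2r_1 − r_0, γ_1 = s_1 − r_0(r_0 − r_1), and γ_2 = (s_1(3s_2 − 2s_1) + 2r_1(s_1(2r_0 − r_1) − r_0 r_1(r_0 − r_1))) / (2s_1 + r_0 r_1). -/
/-- Algebraic inversion of the system relating `(r_0, r_1, s_1, s_2)` to the recurrence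
coefficients `(β_0, β_1, β_2, γ_1, γ_2)`, together with the positivity
`2s_1 + r_0r_1 = γ_1 + s_1 + r_0² > 0`. -/
theorem stmt11 (β₀ β₁ β₂ γ₁ γ₂ r₀ r₁ r₂ s₁ s₂ : ℝ)
    (hγ₁ : 0 < γ₁) (hγ₂ : 0 < γ₂) (hs₁ : 0 < s₁)
    (h1 : r₀ = β₀)
    (h2 : r₁ = (β₀ + β₁) / 2)
    (h3 : s₁ = γ₁ + β₀ * (β₀ - β₁) / 2)
    (h4 : r₂ = (β₀ + β₁ + β₂) / 3)
    (h5 : s₂ = (β₀ ^ 2 + β₁ ^ 2 - (β₀ + β₁) * β₂ + 2 * (γ₁ + γ₂)) / 3)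
    (h6 : β₀ * (s₂ - γ₂) = (β₀ * β₁ - γ₁) * (r₂ - β₂)) :
    2 * s₁ + r₀ * r₁ = γ₁ + s₁ + r₀ ^ 2 ∧
    0 < 2 * s₁ + r₀ * r₁ ∧
    2 * s₁ + r₀ * r₁ ≠ 0 ∧
    β₀ = r₀ ∧
    β₁ = 2 * r₁ - r₀ ∧
    γ₁ = s₁ - r₀ * (r₀ - r₁) ∧
    γ₂ = (s₁ * (3 * s₂ - 2 * s₁) +
        2 * r₁ * (s₁ * (2 * r₀ - r₁) - r₀ * r₁ * (r₀ - r₁))) / (2 * s₁ + r₀ * r₁) := by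
  have heq : 2 * s₁ + r₀ * r₁ = γ₁ + s₁ + r₀ ^ 2 := by
    subst h1 h2 h3; ring
  have hpos : 0 < 2 * s₁ + r₀ * r₁ := by
    rw [heq]; positivity
  refine ⟨heq, hpos, ne_of_gt hpos, h1.symm, by rw [h2, h1]; ring,
    by rw [h3, h1, h2]; ring, ?_⟩
  rw [eq_div_iff (ne_of_gt hpos)]
  subst h1 h2 h3 h4 h5
  linear_combination (-(3/2) * (r₀ + β₁)) * h6
end
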